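/- Let ζ be an irrational real number. Then λ_{k,1}(ζ) = ∞ for all positive integers k if and only if λ_{1,1}(ζ) = ∞, i.e. if and only if ζ is a Liouville number. -/

import Mathlib

open scoped ENNReal

/-- The system `|x| ≤ X`, `max_{1≤i≤k} |ζ_i·x − y_i| ≤ X^(−η)` has at least `j`
linearly independent integer solutions `(x, y_1, …, y_k) ∈ ℤ^(k+1)`.
Here the solution vector `v i : Fin (k+1) → ℤ` has `x = v i 0` and `y_m = v i m.succ`. -/
def HasSolutions (k : ℕ) (ζ : Fin k → ℝ) (η X : ℝ) (j : ℕ) : Prop :=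
  ∃ v : Fin j → (Fin (k + 1) → ℤ), LinearIndependent ℤ v ∧
    ∀ i : Fin j, |(v i 0 : ℝ)| ≤ X ∧
      ∀ m : Fin k, |ζ m * (v i 0 : ℝ) - (v i m.succ : ℝ)| ≤ X ^ (-η)

/-- `λ_{k,j}(ζ⃗)`: the supremum in `[0,∞]` of all `η ∈ ℝ` such that the system has at
least `j` linearly independent solutions for arbitrarily large real `X`. -/
noncomputable def lambdaVec (k j : ℕ) (ζ : Fin k → ℝ) : ℝ≥0∞ :=
  sSup {e : ℝ≥0∞ | ∃ η : ℝ, e = ENNReal.ofReal η ∧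
    ∀ X₀ : ℝ, ∃ X : ℝ, X₀ ≤ X ∧ HasSolutions k ζ η X j}

/-- `λ̂_{k,j}(ζ⃗)`: the supremum in `[0,∞]` of all `η ∈ ℝ` such that the system has at
least `j` linearly independent solutions for every sufficiently large real `X`. -/
noncomputable def lambdaHatVec (k j : ℕ) (ζ : Fin k → ℝ) : ℝ≥0∞ :=
  sSup {e : ℝ≥0∞ | ∃ η : ℝ, e = ENNReal.ofReal η ∧
    ∃ X₀ : ℝ, ∀ X : ℝ, X₀ ≤ X → HasSolutions k ζ η X j}

/-- `λ_{k,j}(ζ) = λ_{k,j}(ζ, ζ², …, ζ^k)`. -/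
noncomputable def lambdaPow (k j : ℕ) (ζ : ℝ) : ℝ≥0∞ :=
  lambdaVec k j fun i => ζ ^ ((i : ℕ) + 1)

/-- `λ̂_{k,j}(ζ) = λ̂_{k,j}(ζ, ζ², …, ζ^k)`. -/
noncomputable def lambdaHatPow (k j : ℕ) (ζ : ℝ) : ℝ≥0∞ :=
  lambdaHatVec k j fun i => ζ ^ ((i : ℕ) + 1)

def Good (k : ℕ) (ζv : Fin k → ℝ) (η : ℝ) : Prop :=
  ∀ X₀ : ℝ, ∃ X : ℝ, X₀ ≤ X ∧ HasSolutions k ζv η X 1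

lemma good_mono {k : ℕ} {ζv : Fin k → ℝ} {η η' : ℝ} (h : η ≤ η') (hg : Good k ζv η') :
    Good k ζv η := by
  intro X₀
  obtain ⟨X, hX, v, hv, hsol⟩ := hg (max X₀ 1)
  have hX1 : (1 : ℝ) ≤ X := le_trans (le_max_right _ _) hX
  refine ⟨X, le_trans (le_max_left _ _) hX, v, hv, fun i => ⟨(hsol i).1, fun m => ?_⟩⟩
  exact le_trans ((hsol i).2 m) (Real.rpow_le_rpow_of_exponent_le hX1 (by linarith))

lemma lambda_top_iff (k : ℕ) (ζv : Fin k → ℝ) :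
    lambdaVec k 1 ζv = ⊤ ↔ ∀ η : ℝ, Good k ζv η := by
  constructor
  · intro h η
    have h1 : ENNReal.ofReal η < lambdaVec k 1 ζv := by
      rw [h]; exact ENNReal.ofReal_lt_top
    rw [lambdaVec, lt_sSup_iff] at h1
    obtain ⟨e, ⟨η', rfl, hcond⟩, hlt⟩ := h1
    have hle : η ≤ η' := by
      by_contra hc
      push_neg at hc
      exact absurd hlt (not_lt.2 (ENNReal.ofReal_le_ofReal hc.le))
    exact good_mono hle hcond
  · intro h
    by_contra hne
    obtain ⟨n, hn⟩ := ENNReal.exists_nat_gt hne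
    exact hn.not_ge (le_sSup ⟨(n : ℝ), by simp, h n⟩)

lemma w0_ne_zero {k : ℕ} {ζv : Fin k → ℝ} {δ : ℝ} (hδ : δ < 1) {w : Fin (k + 1) → ℤ}
    (hw : w ≠ 0) (h : ∀ m : Fin k, |ζv m * (w 0 : ℝ) - (w m.succ : ℝ)| ≤ δ) :
    w 0 ≠ 0 := by
  intro h0
  apply hw
  funext j
  rcases eq_or_ne j 0 with rfl | hj
  · exact h0
  · obtain ⟨m, rfl⟩ := Fin.exists_succ_eq_of_ne_zero hj
    by_contra hm
    have h1 : (1 : ℝ) ≤ |(w m.succ : ℝ)| := by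
      rw [← Int.cast_abs]
      exact_mod_cast Int.one_le_abs hm
    have h2 := h m
    rw [h0] at h2
    simp only [Int.cast_zero, mul_zero, zero_sub, abs_neg] at h2
    linarith

lemma abs_pow_sub_pow {a b M : ℝ} (hM : 1 ≤ M) (ha : |a| ≤ M) (hb : |b| ≤ M) :
    ∀ m : ℕ, |a ^ m - b ^ m| ≤ m * |a - b| * M ^ m := by
  intro m
  have hM0 : (0 : ℝ) ≤ M := le_trans zero_le_one hM
  induction m with
  | zero => simp
  | succ m ih =>
    have key : a ^ (m + 1) - b ^ (m + 1) = a * (a ^ m - b ^ m) + (a - b) * b ^ m := by ring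
    have hb' : |b ^ m| ≤ M ^ m := by
      rw [abs_pow]; exact pow_le_pow_left₀ (abs_nonneg b) hb m
    calc |a ^ (m + 1) - b ^ (m + 1)| ≤ |a| * |a ^ m - b ^ m| + |a - b| * |b ^ m| := by
          rw [key]
          exact (abs_add_le _ _).trans (by rw [abs_mul, abs_mul])
      _ ≤ M * (m * |a - b| * M ^ m) + |a - b| * M ^ m := by
          gcongr
      _ = (m : ℝ) * |a - b| * M ^ (m + 1) + |a - b| * M ^ m := by ring
      _ ≤ (m : ℝ) * |a - b| * M ^ (m + 1) + |a - b| * M ^ (m + 1) := by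
          gcongr
          · exact Nat.le_succ m
      _ = ((m + 1 : ℕ) : ℝ) * |a - b| * M ^ (m + 1) := by push_cast; ring

lemma liouville_good {ζ : ℝ} (hL : Liouville ζ) (η : ℝ) :
    Good 1 (fun i : Fin 1 => ζ ^ ((i : ℕ) + 1)) η := by
  intro X₀
  obtain ⟨b, hbN, a, hne, hlt⟩ := ((Filter.eventually_ge_atTop (max ⌈X₀⌉₊ 2)).and_frequently
    (hL.frequently_exists_num (⌈η⌉₊ + 1))).exists
  have hb2 : (2 : ℕ) ≤ b := le_trans (le_max_right _ _) hbN
  have hbR : (2 : ℝ) ≤ (b : ℝ) := by exact_mod_cast hb2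
  have hb0 : (0 : ℝ) < b := by linarith
  refine ⟨(b : ℝ), ?_, fun _ => ![(b : ℤ), a], ?_, ?_⟩
  · calc X₀ ≤ (⌈X₀⌉₊ : ℝ) := Nat.le_ceil X₀
      _ ≤ (b : ℝ) := by exact_mod_cast le_trans (le_max_left _ _) hbN
  · refine linearIndependent_unique_iff.2 ?_
    intro hc
    have h0 := congrFun hc 0
    simp only [Matrix.cons_val_zero, Pi.zero_apply] at h0
    have : (0 : ℤ) < b := by exact_mod_cast Nat.lt_of_lt_of_le Nat.zero_lt_two hb2
    omega
  · intro i
    constructor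
    · simp only [Matrix.cons_val_zero]
      rw [Int.cast_natCast, abs_of_pos hb0]
    · intro m
      have hm0 : m = 0 := Subsingleton.elim m 0
      subst hm0
      simp only [Matrix.cons_val_zero, Fin.succ_zero_eq_one, Matrix.cons_val_one,
        Matrix.head_cons, Fin.val_zero, zero_add, pow_one, Int.cast_natCast]
      have hkey : ζ * (b : ℝ) - (a : ℝ) = (ζ - a / b) * b := by field_simp
      rw [hkey, abs_mul, abs_of_pos hb0]
      have h1 : |ζ - (a : ℝ) / b| * b ≤ 1 / (b : ℝ) ^ (⌈η⌉₊ + 1) * b :=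
        mul_le_mul_of_nonneg_right hlt.le hb0.le
      have h2 : 1 / (b : ℝ) ^ (⌈η⌉₊ + 1) * b = (b : ℝ) ^ (-(⌈η⌉₊ : ℝ)) := by
        rw [Real.rpow_neg hb0.le, Real.rpow_natCast, pow_succ]
        field_simp
      have h3 : (b : ℝ) ^ (-(⌈η⌉₊ : ℝ)) ≤ (b : ℝ) ^ (-η) :=
        Real.rpow_le_rpow_of_exponent_le (by linarith) (neg_le_neg (Nat.le_ceil η))
      rw [h2] at h1
      linarith

lemma good_liouville {ζ : ℝ} (hζ : Irrational ζ)
    (h : ∀ η, Good 1 (fun i : Fin 1 => ζ ^ ((i : ℕ) + 1)) η) : Liouville ζ := by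
  intro n
  obtain ⟨X, hX2, w, hw, hsol⟩ := h (2 * n + 2) 2
  have hX1 : (1 : ℝ) < X := by linarith
  have hwne : w 0 ≠ (0 : Fin 2 → ℤ) := by
    rw [linearIndependent_unique_iff] at hw
    exact hw
  have hεlt1 : X ^ (-(2 * (n : ℝ) + 2)) < 1 :=
    Real.rpow_lt_one_of_one_lt_of_neg hX1 (by have := Nat.cast_nonneg (α := ℝ) n; linarith)
  set x : ℤ := w 0 0 with hxdef
  set y : ℤ := w 0 1 with hydef
  have hx0 : x ≠ 0 := w0_ne_zero hεlt1 hwne (hsol 0).2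
  have hxX : |(x : ℝ)| ≤ X := (hsol 0).1
  have hε : |ζ * (x : ℝ) - (y : ℝ)| ≤ X ^ (-(2 * (n : ℝ) + 2)) := by
    have := (hsol 0).2 0
    simpa using this
  have hxr : ((x : ℝ)) ≠ 0 := Int.cast_ne_zero.2 hx0
  have hxr1 : (1 : ℝ) ≤ |(x : ℝ)| := by
    rw [← Int.cast_abs]
    exact_mod_cast Int.one_le_abs hx0
  have hxrpos : (0 : ℝ) < |(x : ℝ)| := by linarith
  refine ⟨if 0 < x then 2 * y else -(2 * y), 2 * |x|, ?_, ?_, ?_⟩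
  · have : 1 ≤ |x| := Int.one_le_abs hx0
    omega
  · intro hc
    have cast_eq : ∀ a b : ℤ, (((a : ℚ) / (b : ℚ) : ℚ) : ℝ) = (a : ℝ) / (b : ℝ) := by
      intro a b
      push_cast
      ring
    refine hζ ⟨(((if 0 < x then 2 * y else -(2 * y) : ℤ)) : ℚ) / (((2 * |x| : ℤ)) : ℚ), ?_⟩
    rw [cast_eq]
    exact hc.symm
  · have hab : (((if 0 < x then 2 * y else -(2 * y) : ℤ)) : ℝ) / (((2 * |x| : ℤ)) : ℝ)
        = (y : ℝ) / (x : ℝ) := by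
      rcases lt_or_gt_of_ne hx0 with hneg | hpos
      · rw [if_neg (not_lt.2 hneg.le), abs_of_neg hneg]
        push_cast
        field_simp
      · rw [if_pos hpos, abs_of_pos hpos]
        push_cast
        field_simp
    have hden : (((2 * |x| : ℤ)) : ℝ) = 2 * |(x : ℝ)| := by push_cast; ring
    rw [hab, hden]
    have hζyx : |ζ - (y : ℝ) / x| = |ζ * x - y| / |(x : ℝ)| := by
      rw [← abs_div]
      congr 1
      field_simp
    rw [hζyx]
    have step1 : |ζ * x - y| / |(x : ℝ)| ≤ |ζ * x - y| :=
      div_le_self (abs_nonneg _) hxr1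
    have step2 : X ^ (-(2 * (n : ℝ) + 2)) < X ^ (-(2 * (n : ℝ))) :=
      Real.rpow_lt_rpow_of_exponent_lt hX1 (by linarith)
    have hrw : X ^ (-(2 * (n : ℝ))) = ((X ^ (2 * n) : ℝ))⁻¹ := by
      rw [← Real.rpow_natCast X (2 * n), ← Real.rpow_neg (by linarith)]
      congr 1
      push_cast
      ring
    have step3 : X ^ (-(2 * (n : ℝ))) ≤ 1 / (2 * |(x : ℝ)|) ^ n := by
      rw [hrw, one_div]
      apply inv_anti₀ (by positivity)
      calc (2 * |(x : ℝ)|) ^ n ≤ (X * X) ^ n := by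
            apply pow_le_pow_left₀ (by positivity)
            nlinarith
        _ = X ^ (2 * n) := by rw [two_mul, pow_add, mul_pow]
    linarith

lemma good_pow {ζ : ℝ} (h1 : ∀ η, Good 1 (fun i : Fin 1 => ζ ^ ((i : ℕ) + 1)) η)
    {k : ℕ} (hk : 0 < k) (η : ℝ) : Good k (fun i : Fin k => ζ ^ ((i : ℕ) + 1)) η := by
  have main : ∀ η₀ : ℝ, 0 ≤ η₀ → Good k (fun i : Fin k => ζ ^ ((i : ℕ) + 1)) η₀ := by
    intro η₀ hη₀ X₀'
    set C : ℝ := |ζ| + 1 with hC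
    have hC1 : 1 ≤ C := by have := abs_nonneg ζ; simp only [hC]; linarith
    have hk1 : (1 : ℝ) ≤ k := by exact_mod_cast hk
    set η' : ℝ := k * η₀ + 2 * k + 1 with hη'
    obtain ⟨X, hXmax, w, hw, hsol⟩ := h1 η' (max (max X₀' ((k : ℝ) * C ^ k)) 2)
    have hX2 : (2 : ℝ) ≤ X := le_trans (le_max_right _ _) hXmax
    have hX1 : (1 : ℝ) ≤ X := by linarith
    have hX0 : (0 : ℝ) < X := by linarith
    have hXkC : (k : ℝ) * C ^ k ≤ X :=
      le_trans (le_trans (le_max_right _ _) (le_max_left _ _)) hXmax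
    have hXX0' : X₀' ≤ X := le_trans (le_trans (le_max_left _ _) (le_max_left _ _)) hXmax
    have hη'pos : (1 : ℝ) ≤ η' := by nlinarith
    set x : ℤ := w 0 0 with hxdef
    set y : ℤ := w 0 1 with hydef
    have hεX : |ζ * (x : ℝ) - (y : ℝ)| ≤ X ^ (-η') := by simpa using (hsol 0).2 0
    have hxX : |(x : ℝ)| ≤ X := (hsol 0).1
    have hwne : w 0 ≠ (0 : Fin 2 → ℤ) := by
      rw [linearIndependent_unique_iff] at hw
      exact hw
    have hδ : X ^ (-η') < 1 :=
      Real.rpow_lt_one_of_one_lt_of_neg (by linarith) (by linarith)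
    have hx0 : x ≠ 0 := w0_ne_zero hδ hwne (hsol 0).2
    have hε0 : (0 : ℝ) ≤ |ζ * (x : ℝ) - (y : ℝ)| := abs_nonneg _
    have hε1 : |ζ * (x : ℝ) - (y : ℝ)| ≤ 1 := le_trans hεX hδ.le
    have hCX1 : (1 : ℝ) ≤ C * X := by nlinarith
    have hb1 : |ζ * (x : ℝ)| ≤ C * X := by
      rw [abs_mul]
      have : |ζ| ≤ C := by simp only [hC]; linarith
      exact mul_le_mul this hxX (abs_nonneg _) (by linarith)
    have hb2 : |(y : ℝ)| ≤ C * X := by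
      have h1' : |(y : ℝ)| - |ζ * (x : ℝ)| ≤ |ζ * (x : ℝ) - (y : ℝ)| := by
        rw [abs_sub_comm]
        exact abs_sub_abs_le_abs_sub _ _
      have h2' : |ζ * (x : ℝ)| ≤ |ζ| * X := by
        rw [abs_mul]
        exact mul_le_mul_of_nonneg_left hxX (abs_nonneg ζ)
      have h3' : C * X = |ζ| * X + X := by rw [hC]; ring
      linarith
    refine ⟨X ^ k, le_trans hXX0' (le_self_pow₀ hX1 hk.ne'), ?_⟩
    refine ⟨fun _ => (fun j : Fin (k + 1) => x ^ (k - (j : ℕ)) * y ^ (j : ℕ)), ?_, ?_⟩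
    · apply linearIndependent_unique_iff.2
      intro hc
      have h0 := congrFun hc 0
      simp only [Fin.val_zero, Nat.sub_zero, pow_zero, mul_one, Pi.zero_apply] at h0
      exact hx0 (pow_eq_zero_iff hk.ne' |>.1 h0)
    · intro i
      constructor
      · simp only [Fin.val_zero, Nat.sub_zero, pow_zero, mul_one]
        push_cast
        rw [abs_pow]
        exact pow_le_pow_left₀ (abs_nonneg _) hxX k
      · intro m
        simp only [Fin.val_zero, Nat.sub_zero, pow_zero, mul_one, Fin.val_succ]
        push_cast
        set M : ℕ := (m : ℕ) + 1 with hMdef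
        have hMk : M ≤ k := m.isLt
        have hM1 : 1 ≤ M := Nat.le_add_left 1 _
        set xr : ℝ := (x : ℝ)
        set yr : ℝ := (y : ℝ)
        have hsplit : xr ^ (k - M) * xr ^ M = xr ^ k := by
          rw [← pow_add, Nat.sub_add_cancel hMk]
        have hiden : ζ ^ M * xr ^ k - xr ^ (k - M) * yr ^ M
            = xr ^ (k - M) * ((ζ * xr) ^ M - yr ^ M) := by
          rw [mul_sub, mul_pow, ← mul_assoc, mul_comm (xr ^ (k - M)) (ζ ^ M), mul_assoc, hsplit]
        have key := abs_pow_sub_pow hCX1 hb1 hb2 M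
        have hD0 : (0 : ℝ) ≤ |(ζ * xr) ^ M - yr ^ M| := abs_nonneg _
        have htarget : ((X ^ k : ℝ)) ^ (-η₀) = X ^ (-((k : ℝ) * η₀)) := by
          rw [← Real.rpow_natCast X k, ← Real.rpow_mul hX0.le]
          congr 1
          ring
        rw [htarget]
        calc |ζ ^ M * xr ^ k - xr ^ (k - M) * yr ^ M|
            = |xr| ^ (k - M) * |(ζ * xr) ^ M - yr ^ M| := by
              rw [hiden, abs_mul, abs_pow]
          _ ≤ X ^ (k - M) * ((M : ℝ) * |ζ * xr - yr| * (C * X) ^ M) := by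
              apply mul_le_mul (pow_le_pow_left₀ (abs_nonneg _) hxX _) key hD0
              positivity
          _ ≤ X ^ k * ((k : ℝ) * (X ^ (-η')) * (C * X) ^ k) := by
              apply mul_le_mul (pow_le_pow_right₀ hX1 (Nat.sub_le k M))
              · apply mul_le_mul
                · apply mul_le_mul (by exact_mod_cast hMk) hεX hε0 (by positivity)
                · exact pow_le_pow_right₀ hCX1 hMk
                · positivity
                · positivity
              · positivity
              · positivity
          _ ≤ X ^ (-((k : ℝ) * η₀)) := by
              rw [mul_pow]
              have e1 : (X : ℝ) ^ k * ((k : ℝ) * X ^ (-η') * (C ^ k * X ^ k))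
                  = ((k : ℝ) * C ^ k) * (X ^ k * X ^ k * X ^ (-η')) := by ring
              rw [e1]
              have e2 : (X : ℝ) ^ k * X ^ k * X ^ (-η') = X ^ ((k : ℝ) + k + -η') := by
                rw [← Real.rpow_natCast X k, ← Real.rpow_add hX0, ← Real.rpow_add hX0]
              rw [e2]
              have e3 : (k : ℝ) + k + -η' = -((k : ℝ) * η₀) + (-1) := by rw [hη']; ring
              rw [e3, Real.rpow_add hX0, Real.rpow_neg_one]
              have hA : (0 : ℝ) ≤ X ^ (-((k : ℝ) * η₀)) := Real.rpow_nonneg hX0.le _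
              have hinv : (k : ℝ) * C ^ k * X⁻¹ ≤ 1 := by
                rw [← div_eq_mul_inv]
                exact (div_le_one hX0).2 hXkC
              calc (k : ℝ) * C ^ k * (X ^ (-((k : ℝ) * η₀)) * X⁻¹)
                  = ((k : ℝ) * C ^ k * X⁻¹) * X ^ (-((k : ℝ) * η₀)) := by ring
                _ ≤ 1 * X ^ (-((k : ℝ) * η₀)) := mul_le_mul_of_nonneg_right hinv hA
                _ = _ := one_mul _
  exact good_mono (le_max_left η 0) (main (max η 0) (le_max_right _ _))

/-- Corollary (Bugeaud): for irrational `ζ`, `λ_{k,1}(ζ) = ∞` for all positive `k`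
iff `λ_{1,1}(ζ) = ∞`, i.e. iff `ζ` is a Liouville number. -/
theorem stmt10 (ζ : ℝ) (hζ : Irrational ζ) :
    ((∀ k : ℕ, 0 < k → lambdaPow k 1 ζ = ⊤) ↔ lambdaPow 1 1 ζ = ⊤) ∧
    (lambdaPow 1 1 ζ = ⊤ ↔ Liouville ζ) := by
  have hiff : lambdaPow 1 1 ζ = ⊤ ↔ Liouville ζ := by
    rw [show lambdaPow 1 1 ζ = lambdaVec 1 1 (fun i : Fin 1 => ζ ^ ((i : ℕ) + 1)) from rfl,
      lambda_top_iff]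
    exact ⟨fun h => good_liouville hζ h, fun h η => liouville_good h η⟩
  refine ⟨⟨fun h => h 1 one_pos, fun h1 k hk => ?_⟩, hiff⟩
  rw [show lambdaPow k 1 ζ = lambdaVec k 1 (fun i : Fin k => ζ ^ ((i : ℕ) + 1)) from rfl,
    lambda_top_iff]
  rw [show lambdaPow 1 1 ζ = lambdaVec 1 1 (fun i : Fin 1 => ζ ^ ((i : ℕ) + 1)) from rfl,
    lambda_top_iff] at h1
  exact fun η => good_pow h1 hk η
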